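/- Let A_n be the free associative algebra on n generators over ℂ and P an element of A_n. Then B_2(A_n/⟨P⟩) is isomorphic as a vector space to L_2(A_n)/(L_3(A_n) + (⟨P⟩ ∩ L_2(A_n))), where ⟨P⟩ denotes the two-sided ideal generated by P. -/

import Mathlib

/-- `L₂(A)`: the span of commutators. -/
def L2 (K A : Type*) [Field K] [Ring A] [Algebra K A] : Submodule K A :=
  Submodule.span K {z | ∃ a b : A, z = a * b - b * a}

/-- `L₃(A) = [A, L₂(A)]`. -/
def L3 (K A : Type*) [Field K] [Ring A] [Algebra K A] : Submodule K A :=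
  Submodule.span K {z | ∃ a : A, ∃ x ∈ L2 K A, z = a * x - x * a}

/-- `B₂(A) = L₂(A)/L₃(A)`. -/
abbrev B2 (K A : Type*) [Field K] [Ring A] [Algebra K A] :=
  (L2 K A) ⧸ (Submodule.comap (L2 K A).subtype (L3 K A))

/-- The two-sided ideal generated by `P`, as a subspace. -/
def idealGen (K A : Type*) [Field K] [Ring A] [Algebra K A] (P : A) : Submodule K A :=
  Submodule.span K {z | ∃ a b : A, z = a * P * b}

section Aux

variable {K A B : Type*} [Field K] [Ring A] [Algebra K A] [Ring B] [Algebra K B]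

lemma L3_le_L2 : L3 K A ≤ L2 K A := by
  rw [L3, Submodule.span_le]
  rintro z ⟨a, x, hx, rfl⟩
  exact Submodule.subset_span ⟨a, x, rfl⟩

lemma map_L2 (f : A →ₐ[K] B) (hf : Function.Surjective f) :
    (L2 K A).map f.toLinearMap = L2 K B := by
  rw [L2, L2, Submodule.map_span]
  congr 1
  ext z
  constructor
  · rintro ⟨w, ⟨a, b, rfl⟩, rfl⟩
    exact ⟨f a, f b, by simp [mul_comm]⟩
  · rintro ⟨a, b, rfl⟩
    obtain ⟨a', rfl⟩ := hf a
    obtain ⟨b', rfl⟩ := hf b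
    exact ⟨a' * b' - b' * a', ⟨a', b', rfl⟩, by simp⟩

lemma map_L3 (f : A →ₐ[K] B) (hf : Function.Surjective f) :
    (L3 K A).map f.toLinearMap = L3 K B := by
  rw [L3, L3, Submodule.map_span]
  congr 1
  ext z
  constructor
  · rintro ⟨w, ⟨a, x, hx, rfl⟩, rfl⟩
    refine ⟨f a, f x, ?_, by simp⟩
    rw [← map_L2 f hf]
    exact ⟨x, hx, rfl⟩
  · rintro ⟨a, x, hx, rfl⟩
    rw [← map_L2 f hf] at hx
    obtain ⟨x', hx', rfl⟩ := hx
    obtain ⟨a', rfl⟩ := hf a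
    exact ⟨a' * x' - x' * a', ⟨a', x', hx', rfl⟩, by simp⟩

/-- Main abstract lemma. -/
lemma main_iso (f : A →ₐ[K] B) (hf : Function.Surjective f) (I : Submodule K A)
    (hker : ∀ x : A, f x = 0 ↔ x ∈ I) :
    Nonempty (B2 K B ≃ₗ[K]
      (L2 K A ⧸ Submodule.comap (L2 K A).subtype (L3 K A ⊔ (I ⊓ L2 K A)))) := by
  have hmem : ∀ x : L2 K A, f x ∈ L2 K B := by
    intro x
    rw [← map_L2 f hf]
    exact ⟨x, x.2, rfl⟩
  let φ : L2 K A →ₗ[K] B2 K B :=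
    (Submodule.comap (L2 K B).subtype (L3 K B)).mkQ.comp
      (LinearMap.codRestrict (L2 K B) (f.toLinearMap.comp (L2 K A).subtype) hmem)
  have hφ : ∀ x : L2 K A, φ x = Submodule.Quotient.mk ⟨f x, hmem x⟩ := fun x => rfl
  have hsurj : Function.Surjective φ := by
    intro q
    obtain ⟨y, rfl⟩ := Submodule.Quotient.mk_surjective _ q
    have : (y : B) ∈ (L2 K A).map f.toLinearMap := by rw [map_L2 f hf]; exact y.2
    obtain ⟨x, hx, hfx⟩ := this
    refine ⟨⟨x, hx⟩, ?_⟩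
    rw [hφ]
    congr 1
    exact Subtype.ext hfx
  have hkerφ : LinearMap.ker φ =
      Submodule.comap (L2 K A).subtype (L3 K A ⊔ (I ⊓ L2 K A)) := by
    ext x
    simp only [LinearMap.mem_ker, hφ, Submodule.Quotient.mk_eq_zero, Submodule.mem_comap,
      Submodule.subtype_apply]
    constructor
    · intro h
      have : (f x : B) ∈ (L3 K A).map f.toLinearMap := by rw [map_L3 f hf]; exact h
      obtain ⟨y, hy, hfy⟩ := this
      have h1 : (x : A) - y ∈ I := by
        rw [← hker]
        rw [map_sub, sub_eq_zero]
        exact hfy.symm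
      have h2 : (x : A) - y ∈ L2 K A := Submodule.sub_mem _ x.2 (L3_le_L2 hy)
      have : (x : A) = y + ((x : A) - y) := by abel
      rw [this]
      exact Submodule.add_mem _ (Submodule.mem_sup_left hy)
        (Submodule.mem_sup_right ⟨h1, h2⟩)
    · intro h
      obtain ⟨y, hy, z, hz, hyz⟩ := Submodule.mem_sup.mp h
      have : f (x : A) = f y := by
        have hz0 : f z = 0 := (hker z).mpr hz.1
        rw [← hyz]; simp [hz0]
      rw [this]
      rw [← map_L3 f hf]
      exact ⟨y, hy, rfl⟩
  exact ⟨(LinearMap.quotKerEquivOfSurjective φ hsurj).symm.trans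
    (Submodule.quotEquivOfEq _ _ hkerφ)⟩

end Aux

section Ker

variable {K A : Type*} [Field K] [Ring A] [Algebra K A]

lemma idealGen_mul_left (P a : A) {x : A} (hx : x ∈ idealGen K A P) :
    a * x ∈ idealGen K A P := by
  induction hx using Submodule.span_induction with
  | mem z hz => obtain ⟨c, d, rfl⟩ := hz; exact Submodule.subset_span ⟨a * c, d, by noncomm_ring⟩
  | zero => simpa using (idealGen K A P).zero_mem
  | add u v _ _ hu hv => rw [mul_add]; exact Submodule.add_mem _ hu hv
  | smul c u _ hu => rw [mul_smul_comm]; exact Submodule.smul_mem _ c hu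

lemma idealGen_mul_right (P b : A) {x : A} (hx : x ∈ idealGen K A P) :
    x * b ∈ idealGen K A P := by
  induction hx using Submodule.span_induction with
  | mem z hz => obtain ⟨c, d, rfl⟩ := hz; exact Submodule.subset_span ⟨c, d * b, by noncomm_ring⟩
  | zero => simpa using (idealGen K A P).zero_mem
  | add u v _ _ hu hv => rw [add_mul]; exact Submodule.add_mem _ hu hv
  | smul c u _ hu => rw [smul_mul_assoc]; exact Submodule.smul_mem _ c hu

/-- The ring congruence associated to the two-sided ideal generated by `P`. -/
def idealCon (K A : Type*) [Field K] [Ring A] [Algebra K A] (P : A) : RingCon A where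
  r a b := a - b ∈ idealGen K A P
  iseqv := by
    constructor
    · intro a; simpa using (idealGen K A P).zero_mem
    · intro a b h; simpa using (idealGen K A P).neg_mem h
    · intro a b c h1 h2; have := (idealGen K A P).add_mem h1 h2; simpa using this
  mul' := by
    intro a b c d h1 h2
    show a * c - b * d ∈ idealGen K A P
    have h3 : a * c - b * d = a * (c - d) + (a - b) * d := by noncomm_ring
    rw [h3]
    exact (idealGen K A P).add_mem (idealGen_mul_left P a h2) (idealGen_mul_right P d h1)
  add' := by
    intro a b c d h1 h2
    show a + c - (b + d) ∈ idealGen K A P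
    have h3 : a + c - (b + d) = (a - b) + (c - d) := by abel
    rw [h3]
    exact (idealGen K A P).add_mem h1 h2

lemma P_mem_idealGen (P : A) : P ∈ idealGen K A P :=
  Submodule.subset_span ⟨1, 1, by simp⟩

lemma mkAlgHom_ker (P : A) (x : A) :
    RingQuot.mkAlgHom K (fun a b : A => a = P ∧ b = 0) x = 0 ↔ x ∈ idealGen K A P := by
  set r := fun a b : A => a = P ∧ b = 0 with hr
  constructor
  · intro h
    have hcond : ∀ ⦃a b : A⦄, r a b → (idealCon K A P).mk' a = (idealCon K A P).mk' b := by
      rintro a b ⟨ha, hb⟩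
      rw [ha, hb]
      refine RingCon.eq _ |>.mpr ?_
      show P - 0 ∈ idealGen K A P
      simpa using P_mem_idealGen P
    have h0 : RingQuot.mkRingHom r x = RingQuot.mkRingHom r 0 := by
      have : (RingQuot.mkAlgHom K r : A →+* RingQuot r) = RingQuot.mkRingHom r :=
        RingQuot.mkAlgHom_coe K r
      calc RingQuot.mkRingHom r x = RingQuot.mkAlgHom K r x := by rw [← this]; rfl
        _ = 0 := h
        _ = RingQuot.mkAlgHom K r 0 := by simp
        _ = RingQuot.mkRingHom r 0 := by rw [← this]; rfl
    have := congrArg (RingQuot.lift ⟨(idealCon K A P).mk', hcond⟩) h0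
    rw [RingQuot.lift_mkRingHom_apply, RingQuot.lift_mkRingHom_apply] at this
    have hx0 : (idealCon K A P) x 0 := (RingCon.eq _).mp this
    have hx1 : x - 0 ∈ idealGen K A P := hx0
    simpa using hx1
  · intro h
    have hle : idealGen K A P ≤ LinearMap.ker (RingQuot.mkAlgHom K r).toLinearMap := by
      rw [idealGen, Submodule.span_le]
      rintro z ⟨a, b, rfl⟩
      have hP : RingQuot.mkAlgHom K r P = 0 := by
        have := RingQuot.mkAlgHom_rel K (s := r) (x := P) (y := 0) ⟨rfl, rfl⟩
        simpa using this
      simp only [SetLike.mem_coe, LinearMap.mem_ker, AlgHom.toLinearMap_apply, map_mul, hP,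
        mul_zero, zero_mul]
    exact hle h

end Ker

/-- `B₂(Aₙ/⟨P⟩)` is isomorphic as a vector space to
`L₂(Aₙ)/(L₃(Aₙ) + (⟨P⟩ ∩ L₂(Aₙ)))`. -/
theorem stmt1 (n : ℕ) (P : FreeAlgebra ℂ (Fin n)) :
    Nonempty
      (B2 ℂ (RingQuot (fun a b : FreeAlgebra ℂ (Fin n) => a = P ∧ b = 0)) ≃ₗ[ℂ]
        (L2 ℂ (FreeAlgebra ℂ (Fin n)) ⧸
          Submodule.comap (L2 ℂ (FreeAlgebra ℂ (Fin n))).subtype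
            (L3 ℂ (FreeAlgebra ℂ (Fin n)) ⊔
              (idealGen ℂ (FreeAlgebra ℂ (Fin n)) P ⊓ L2 ℂ (FreeAlgebra ℂ (Fin n)))))) := by
  exact main_iso (RingQuot.mkAlgHom ℂ (fun a b : FreeAlgebra ℂ (Fin n) => a = P ∧ b = 0))
    (RingQuot.mkAlgHom_surjective ℂ _) (idealGen ℂ _ P) (mkAlgHom_ker P)
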